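/- For a nontrivial 1-generated F-semilattice A generated by a ∈ A, the following are equivalent: (a) the quasivariety Q(A) is minimal (its only proper subquasivariety is the trivial one); (b) for every b ∈ A generating a non-singleton subalgebra B, there is an isomorphism A → B sending a to b; (c) A is isomorphic to each of its nontrivial 1-generated subalgebras; (d) each element of A other than the least element (if it exists) generates a subalgebra isomorphic to A. -/

import Mathlib

inductive SLTerm (F : Type) : Type where
  | var : SLTerm F
  | meet : SLTerm F → SLTerm F → SLTerm F
  | act : F → SLTerm F → SLTerm F

/-- Evaluation of a unary term at an element of an `F`-semilattice. -/
def SLTerm.eval {F A : Type} [SemilatticeInf A] [SMul F A] : SLTerm F → A → A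
  | .var, a => a
  | .meet s t, a => s.eval a ⊓ t.eval a
  | .act g t, a => g • t.eval a

inductive SLTermN (F : Type) : Type where
  | var : ℕ → SLTermN F
  | meet : SLTermN F → SLTermN F → SLTermN F
  | act : F → SLTermN F → SLTermN F

def SLTermN.eval {F A : Type} [SemilatticeInf A] [SMul F A] : SLTermN F → (ℕ → A) → A
  | .var n, v => v n
  | .meet s t, v => s.eval v ⊓ t.eval v
  | .act g t, v => g • t.eval v

def SatQI (F : Type) (A : Type) [SemilatticeInf A] [SMul F A]
    (prem : List (SLTermN F × SLTermN F)) (c : SLTermN F × SLTermN F) : Prop :=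
  ∀ v : ℕ → A, (∀ p ∈ prem, p.1.eval v = p.2.eval v) → c.1.eval v = c.2.eval v

/-- `B` belongs to the quasivariety generated by `A`. -/
def InQ (F : Type) (A B : Type) [SemilatticeInf A] [SMul F A]
    [SemilatticeInf B] [SMul F B] : Prop :=
  ∀ prem c, SatQI F A prem c → SatQI F B prem c

/-- `B` belongs to the variety generated by `A`. -/
def InV (F : Type) (A B : Type) [SemilatticeInf A] [SMul F A]
    [SemilatticeInf B] [SMul F B] : Prop :=
  ∀ s t : SLTermN F, (∀ v : ℕ → A, s.eval v = t.eval v) → ∀ v : ℕ → B, s.eval v = t.eval v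

def IsHom (F : Type) {A B : Type} [SemilatticeInf A] [SMul F A] [SemilatticeInf B] [SMul F B]
    (φ : A → B) : Prop :=
  (∀ x y : A, φ (x ⊓ y) = φ x ⊓ φ y) ∧ ∀ (g : F) (x : A), φ (g • x) = g • φ x

/-- The subuniverse of `A` generated by `a`. -/
def genSet (F : Type) {A : Type} [SemilatticeInf A] [SMul F A] (a : A) : Set A :=
  Set.range fun t : SLTerm F => t.eval a

/-- The quasivariety generated by `A` is a minimal quasivariety of `F`-semilattices. -/
def MinGen (F : Type) [CommGroup F] (A : Type) [SemilatticeInf A] [MulAction F A] : Prop :=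
  Nontrivial A ∧
    ∀ (B : Type) [SemilatticeInf B] [MulAction F B],
      (∀ (g : F) (x y : B), g • (x ⊓ y) = g • x ⊓ g • y) →
      InQ F A B → Nontrivial B → InQ F B A
section Aux

variable {F : Type} [CommGroup F] {A : Type} [SemilatticeInf A] [MulAction F A]

lemma smul_mono' (hA : ∀ (g : F) (x y : A), g • (x ⊓ y) = g • x ⊓ g • y)
    (g : F) {x y : A} (h : x ≤ y) : g • x ≤ g • y := by
  have h2 : g • (x ⊓ y) = g • x := by rw [inf_eq_left.2 h]
  rw [hA] at h2
  exact inf_eq_left.1 h2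

lemma eval_inf (hA : ∀ (g : F) (x y : A), g • (x ⊓ y) = g • x ⊓ g • y)
    (t : SLTerm F) (x y : A) : t.eval (x ⊓ y) = t.eval x ⊓ t.eval y := by
  induction t with
  | var => rfl
  | meet s t ihs iht => simp only [SLTerm.eval, ihs, iht, inf_inf_inf_comm]
  | act g t ih => simp only [SLTerm.eval, ih, hA]

lemma eval_smul' (hA : ∀ (g : F) (x y : A), g • (x ⊓ y) = g • x ⊓ g • y)
    (t : SLTerm F) (g : F) (x : A) : t.eval (g • x) = g • t.eval x := by
  induction t with
  | var => rfl
  | meet s t ihs iht => simp only [SLTerm.eval, ihs, iht, hA]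
  | act h t ih => simp only [SLTerm.eval, ih, smul_smul, mul_comm]

lemma eval_comm (hA : ∀ (g : F) (x y : A), g • (x ⊓ y) = g • x ⊓ g • y)
    (s t : SLTerm F) (x : A) : s.eval (t.eval x) = t.eval (s.eval x) := by
  induction s with
  | var => rfl
  | meet s₁ s₂ ih1 ih2 => simp only [SLTerm.eval, ih1, ih2, ← eval_inf hA]
  | act g s₁ ih => simp only [SLTerm.eval, ih, ← eval_smul' hA]

lemma eval_le (hA : ∀ (g : F) (x y : A), g • (x ⊓ y) = g • x ⊓ g • y)
    (t : SLTerm F) (x : A) : ∃ g : F, t.eval x ≤ g • x := by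
  induction t with
  | var => exact ⟨1, by simp [SLTerm.eval, one_smul]⟩
  | meet s t ihs iht =>
      obtain ⟨g, hg⟩ := ihs
      exact ⟨g, le_trans inf_le_left hg⟩
  | act g t ih =>
      obtain ⟨h, hh⟩ := ih
      refine ⟨g * h, ?_⟩
      have := smul_mono' hA g hh
      rwa [smul_smul] at this

lemma hom_eval {φ : A → A} (hφ : IsHom F φ) (t : SLTerm F) (x : A) :
    φ (t.eval x) = t.eval (φ x) := by
  induction t with
  | var => rfl
  | meet s t ihs iht => simp only [SLTerm.eval, hφ.1, ihs, iht]
  | act g t ih => simp only [SLTerm.eval, hφ.2, ih]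

/-- Uniqueness of elements generating singleton subalgebras. -/
lemma sing_unique (hA : ∀ (g : F) (x y : A), g • (x ⊓ y) = g • x ⊓ g • y)
    {a x y : A} (hx : ∀ t : SLTerm F, t.eval x = x) (hy : ∀ t : SLTerm F, t.eval y = y)
    (ex : ∃ t : SLTerm F, t.eval a = x) (ey : ∃ t : SLTerm F, t.eval a = y) : x = y := by
  obtain ⟨tx, htx⟩ := ex
  obtain ⟨ty, hty⟩ := ey
  calc x = ty.eval x := (hx ty).symm
    _ = ty.eval (tx.eval a) := by rw [htx]
    _ = tx.eval (ty.eval a) := eval_comm hA ty tx a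
    _ = tx.eval y := by rw [hty]
    _ = y := hy tx

lemma not_nontriv_sing {b : A}
    (h : ¬ (∃ x y : A, x ∈ genSet F b ∧ y ∈ genSet F b ∧ x ≠ y)) :
    ∀ t : SLTerm F, t.eval b = b := by
  intro t
  by_contra hne
  exact h ⟨t.eval b, b, ⟨t, rfl⟩, ⟨.var, rfl⟩, hne⟩

lemma isBot_sing (hA : ∀ (g : F) (x y : A), g • (x ⊓ y) = g • x ⊓ g • y)
    {b : A} (hb : IsBot b) : ∀ t : SLTerm F, t.eval b = b := by
  have hfix : ∀ g : F, g • b = b := by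
    intro g
    have hbot : IsBot (g • b) := by
      intro x
      have h1 : b ≤ g⁻¹ • x := hb _
      have h2 := smul_mono' hA g h1
      rwa [smul_inv_smul] at h2
    exact le_antisymm (hbot b) (hb _)
  intro t
  induction t with
  | var => rfl
  | meet s t ihs iht => simp only [SLTerm.eval, ihs, iht, inf_idem]
  | act g t ih => simp only [SLTerm.eval, ih, hfix]

end Aux

/-- Embed a one-variable term as a term in variable `n`. -/
def slToN {F : Type} (n : ℕ) : SLTerm F → SLTermN F
  | .var => .var n
  | .meet s t => .meet (slToN n s) (slToN n t)
  | .act g t => .act g (slToN n t)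

lemma slToN_eval {F B : Type} [SemilatticeInf B] [SMul F B] (n : ℕ) (t : SLTerm F)
    (w : ℕ → B) : (slToN n t).eval w = t.eval (w n) := by
  induction t with
  | var => rfl
  | meet s t ihs iht => simp only [slToN, SLTermN.eval, SLTerm.eval, ihs, iht]
  | act g t ih => simp only [slToN, SLTermN.eval, SLTerm.eval, ih]

/-- Substitute one-variable terms for the variables of a term. -/
def slSubst {F : Type} (τ : ℕ → SLTerm F) : SLTermN F → SLTerm F
  | .var n => τ n
  | .meet s t => .meet (slSubst τ s) (slSubst τ t)
  | .act g t => .act g (slSubst τ t)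

lemma slSubst_eval {F B : Type} [SemilatticeInf B] [SMul F B] (τ : ℕ → SLTerm F)
    (t : SLTermN F) (x : B) : (slSubst τ t).eval x = t.eval (fun n => (τ n).eval x) := by
  induction t with
  | var n => rfl
  | meet s t ihs iht => simp only [slSubst, SLTermN.eval, SLTerm.eval, ihs, iht]
  | act g t ih => simp only [slSubst, SLTermN.eval, SLTerm.eval, ih]

section Main

variable {F : Type} [CommGroup F] {A : Type} [SemilatticeInf A] [MulAction F A]

/-- (d) implies (c). -/
lemma lem_dc (hA : ∀ (g : F) (x y : A), g • (x ⊓ y) = g • x ⊓ g • y)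
    (hd : ∀ b : A, ¬ IsBot b →
      ∃ φ : A → A, Function.Injective φ ∧ Set.range φ = genSet F b ∧ IsHom F φ) :
    ∀ b : A, (∃ x y : A, x ∈ genSet F b ∧ y ∈ genSet F b ∧ x ≠ y) →
      ∃ φ : A → A, Function.Injective φ ∧ Set.range φ = genSet F b ∧ IsHom F φ := by
  intro b hb
  refine hd b ?_
  intro hbot
  obtain ⟨x, y, ⟨s, hs⟩, ⟨t, ht⟩, hxy⟩ := hb
  replace hs : s.eval b = x := hs
  replace ht : t.eval b = y := ht
  have hsing := isBot_sing hA hbot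
  exact hxy (by rw [← hs, ← ht, hsing s, hsing t])

/-- (b) implies (d). -/
lemma lem_bd (hA : ∀ (g : F) (x y : A), g • (x ⊓ y) = g • x ⊓ g • y)
    (hnt : Nontrivial A) (a : A) (hgen : ∀ x : A, ∃ t : SLTerm F, t.eval a = x)
    (hb : ∀ b : A, (∃ x y : A, x ∈ genSet F b ∧ y ∈ genSet F b ∧ x ≠ y) →
      ∃ φ : A → A, Function.Injective φ ∧ Set.range φ = genSet F b ∧ IsHom F φ ∧ φ a = b) :
    ∀ b : A, ¬ IsBot b →
      ∃ φ : A → A, Function.Injective φ ∧ Set.range φ = genSet F b ∧ IsHom F φ := by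
  intro b hbot
  by_cases hbs : ∃ x y : A, x ∈ genSet F b ∧ y ∈ genSet F b ∧ x ≠ y
  · obtain ⟨φ, h1, h2, h3, _⟩ := hb b hbs
    exact ⟨φ, h1, h2, h3⟩
  · -- `b` generates a singleton subalgebra; show `b` is the bottom, contradiction.
    exfalso
    have hsb : ∀ t : SLTerm F, t.eval b = b := not_nontriv_sing hbs
    refine hbot ?_
    intro c
    by_cases hw : ∃ x y : A, x ∈ genSet F (b ⊓ c) ∧ y ∈ genSet F (b ⊓ c) ∧ x ≠ y
    · exfalso
      obtain ⟨φ, hinj, hrange, hhom, hφa⟩ := hb _ hw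
      obtain ⟨β, hβ⟩ := hgen b
      obtain ⟨γ, hγ⟩ := hgen c
      -- φ b = b
      have hβc : β.eval c = b := by
        rw [← hγ, eval_comm hA, hβ, hsb γ]
      have hφb : φ b = b := by
        rw [← hβ, hom_eval hhom, hφa, eval_inf hA, hβ, hsb β, hβc, inf_idem]
      -- every element of the range of φ is ≤ b
      have hle : ∀ v : A, φ v ≤ b := by
        intro v
        have : φ v ∈ genSet F (b ⊓ c) := hrange ▸ Set.mem_range_self v
        obtain ⟨t, ht⟩ := this
        replace ht : t.eval (b ⊓ c) = φ v := ht
        rw [← ht, eval_inf hA, hsb t]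
        exact le_trans inf_le_left le_rfl
      -- hence b is the top of A
      have htop : ∀ v : A, v ≤ b := by
        intro v
        have h1 : φ v ⊓ φ b = φ v := inf_eq_left.2 (by rw [hφb]; exact hle v)
        rw [← hhom.1] at h1
        exact inf_eq_left.1 (hinj h1)
      -- b = g • a for some g, so a = b, so A is trivial
      obtain ⟨g, hg⟩ := eval_le hA β a
      rw [hβ] at hg
      have hba : b = g • a := le_antisymm hg (htop _)
      have hab2 : a = b := by
        have : g⁻¹ • b = b := hsb (.act g⁻¹ .var)
        rw [← this, hba, inv_smul_smul]
      obtain ⟨p, q, hpq⟩ := hnt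
      obtain ⟨tp, htp⟩ := hgen p
      obtain ⟨tq, htq⟩ := hgen q
      exact hpq (by rw [← htp, ← htq, hab2, hsb tp, hsb tq])
    · -- b ⊓ c also generates a singleton, so b ⊓ c = b by uniqueness
      have hsw : ∀ t : SLTerm F, t.eval (b ⊓ c) = b ⊓ c := not_nontriv_sing hw
      have : b ⊓ c = b := sing_unique hA hsw hsb (hgen _) (hgen _)
      rw [← this]
      exact inf_le_right


/-- (c) implies (a). -/
lemma lem_ca (hA : ∀ (g : F) (x y : A), g • (x ⊓ y) = g • x ⊓ g • y)
    (hnt : Nontrivial A) (a : A) (hgen : ∀ x : A, ∃ t : SLTerm F, t.eval a = x)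
    (hc : ∀ b : A, (∃ x y : A, x ∈ genSet F b ∧ y ∈ genSet F b ∧ x ≠ y) →
      ∃ φ : A → A, Function.Injective φ ∧ Set.range φ = genSet F b ∧ IsHom F φ) :
    MinGen F A := by
  refine ⟨hnt, ?_⟩
  intro B _ _ _hdB hAB hntB prem c hsat v hv
  have hgen' := hgen
  choose τA hτA using hgen'
  set σ : ℕ → SLTerm F := fun n => τA (v n) with hσ
  have hσa : ∀ n, (σ n).eval a = v n := fun n => hτA (v n)
  -- one-variable equations valid at `a` are identities of `A`, hence hold in `B`
  have transfer : ∀ P Q : SLTerm F, P.eval a = Q.eval a → ∀ b : B, P.eval b = Q.eval b := by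
    intro P Q h b
    have hidA : SatQI F A [] (slToN 0 P, slToN 0 Q) := by
      intro w _
      show (slToN 0 P).eval w = (slToN 0 Q).eval w
      rw [slToN_eval, slToN_eval]
      obtain ⟨u, hu⟩ := hgen (w 0)
      rw [← hu, eval_comm hA P u a, eval_comm hA Q u a, h]
    have := hAB [] _ hidA (fun _ => b) (by simp)
    simpa only [slToN_eval] using this
  have hprem : ∀ p ∈ prem, ∀ b : B, (slSubst σ p.1).eval b = (slSubst σ p.2).eval b := by
    intro p hp
    apply transfer
    rw [slSubst_eval, slSubst_eval]
    have hfe : (fun n => (σ n).eval a) = v := funext hσa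
    rw [hfe]
    exact hv p hp
  have hconc : ∀ b : B, (slSubst σ c.1).eval b = (slSubst σ c.2).eval b := by
    intro b
    have h1 := hsat (fun n => (σ n).eval b) (by
      intro p hp
      show SLTermN.eval _ _ = SLTermN.eval _ _
      rw [← slSubst_eval, ← slSubst_eval]
      exact hprem p hp b)
    rw [slSubst_eval, slSubst_eval]
    exact h1
  -- reduce the goal to an equation at `a`
  set P₁ : SLTerm F := slSubst σ c.1 with hP₁
  set P₂ : SLTerm F := slSubst σ c.2 with hP₂
  have hgoal : c.1.eval v = P₁.eval a := by
    rw [hP₁, slSubst_eval]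
    congr 1
    exact (funext hσa).symm
  have hgoal2 : c.2.eval v = P₂.eval a := by
    rw [hP₂, slSubst_eval]
    congr 1
    exact (funext hσa).symm
  rw [hgoal, hgoal2]
  by_contra hne'
  -- any point of `A` where `P₁ = P₂` generates a singleton subalgebra
  have hii : ∀ x : A, P₁.eval x = P₂.eval x → ∀ t : SLTerm F, t.eval x = x := by
    intro x hx
    by_contra hns
    push_neg at hns
    obtain ⟨t₀, ht₀⟩ := hns
    obtain ⟨ψ, hinj, hrange, hhom⟩ := hc x ⟨t₀.eval x, x, ⟨t₀, rfl⟩, ⟨.var, rfl⟩, ht₀⟩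
    have ha' : ψ a ∈ genSet F x := hrange ▸ Set.mem_range_self a
    obtain ⟨V, hV⟩ := ha'
    replace hV : V.eval x = ψ a := hV
    have e1 : P₁.eval (ψ a) = P₂.eval (ψ a) := by
      rw [← hV, eval_comm hA P₁ V x, eval_comm hA P₂ V x, hx]
    have e2 : ψ (P₁.eval a) = ψ (P₂.eval a) := by
      rw [hom_eval hhom, hom_eval hhom, e1]
    exact hne' (hinj e2)
  obtain ⟨b₀, b₁, hb01⟩ := hntB
  have h2 : SatQI F A [(slToN 0 P₁, slToN 0 P₂), (slToN 1 P₁, slToN 1 P₂)]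
      (.var 0, .var 1) := by
    intro w hw
    have h0 := hw (slToN 0 P₁, slToN 0 P₂) List.mem_cons_self
    have h1 := hw (slToN 1 P₁, slToN 1 P₂) (by simp)
    simp only [slToN_eval] at h0 h1
    show w 0 = w 1
    exact sing_unique hA (hii _ h0) (hii _ h1) (hgen _) (hgen _)
  have h2B := hAB _ _ h2 (fun n => if n = 0 then b₀ else b₁) (by
    intro p hp
    simp only [List.mem_cons, List.mem_singleton, List.not_mem_nil, or_false] at hp
    rcases hp with h | h <;> subst h <;>
      simp only [slToN_eval, if_pos rfl] <;>
      first
        | exact hconc b₀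
        | · show P₁.eval (if 1 = 0 then b₀ else b₁) = P₂.eval (if 1 = 0 then b₀ else b₁)
            rw [if_neg (by norm_num)]
            exact hconc b₁)
  have : b₀ = b₁ := by simpa [SLTermN.eval] using h2B
  exact hb01 this


/-- (a) implies (b). -/
lemma lem_ab (hA : ∀ (g : F) (x y : A), g • (x ⊓ y) = g • x ⊓ g • y)
    (a : A) (hgen : ∀ x : A, ∃ t : SLTerm F, t.eval a = x)
    (hmin : MinGen F A) :
    ∀ b : A, (∃ x y : A, x ∈ genSet F b ∧ y ∈ genSet F b ∧ x ≠ y) →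
      ∃ φ : A → A, Function.Injective φ ∧ Set.range φ = genSet F b ∧ IsHom F φ ∧ φ a = b := by
  have hgen' := hgen
  choose τA hτA using hgen'
  intro b hb
  -- the subalgebra generated by b
  have hinf : ∀ ⦃x y : A⦄, x ∈ genSet F b → y ∈ genSet F b → x ⊓ y ∈ genSet F b := by
    rintro x y ⟨s, hs⟩ ⟨t, ht⟩
    replace hs : s.eval b = x := hs
    replace ht : t.eval b = y := ht
    exact ⟨s.meet t, by show SLTerm.eval _ b = _; rw [SLTerm.eval]; rw [hs, ht]⟩
  have hsmul : ∀ (g : F) ⦃x : A⦄, x ∈ genSet F b → g • x ∈ genSet F b := by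
    rintro g x ⟨s, hs⟩
    replace hs : s.eval b = x := hs
    exact ⟨s.act g, by show SLTerm.eval _ b = _; rw [SLTerm.eval]; rw [hs]⟩
  let B := { x : A // x ∈ genSet F b }
  letI instInfB : SemilatticeInf B := Subtype.semilatticeInf hinf
  letI instSMulB : SMul F B := ⟨fun g x => ⟨g • x.1, hsmul g x.2⟩⟩
  letI instMAB : MulAction F B :=
    { one_smul := fun x => Subtype.ext (one_smul F x.1)
      mul_smul := fun g h x => Subtype.ext (mul_smul g h x.1) }
  have hval_inf : ∀ x y : B, ((x ⊓ y : B) : A) = (x : A) ⊓ (y : A) := fun x y => rfl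
  have hval_smul : ∀ (g : F) (x : B), ((g • x : B) : A) = g • (x : A) := fun g x => rfl
  have hvalN : ∀ (t : SLTermN F) (w : ℕ → B),
      ((t.eval w : B) : A) = t.eval (fun n => ((w n : A))) := by
    intro t w
    induction t with
    | var n => rfl
    | meet s t ihs iht =>
        show ((SLTermN.eval _ _ : B) : A) = _
        rw [SLTermN.eval, SLTermN.eval, hval_inf, ihs, iht]
    | act g t ih =>
        show ((SLTermN.eval _ _ : B) : A) = _
        rw [SLTermN.eval, SLTermN.eval, hval_smul, ih]
  have hval1 : ∀ (t : SLTerm F) (z : B), ((t.eval z : B) : A) = t.eval (z : A) := by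
    intro t z
    induction t with
    | var => rfl
    | meet s t ihs iht =>
        show ((SLTerm.eval _ _ : B) : A) = _
        rw [SLTerm.eval, SLTerm.eval, hval_inf, ihs, iht]
    | act g t ih =>
        show ((SLTerm.eval _ _ : B) : A) = _
        rw [SLTerm.eval, SLTerm.eval, hval_smul, ih]
  have hdB : ∀ (g : F) (x y : B), g • (x ⊓ y) = g • x ⊓ g • y := by
    intro g x y
    apply Subtype.ext
    rw [hval_smul, hval_inf, hval_inf, hval_smul, hval_smul]
    exact hA g x.1 y.1
  have hABsub : InQ F A B := by
    intro prem c hsat w hw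
    apply Subtype.val_injective
    rw [hvalN, hvalN]
    refine hsat (fun n => ((w n : A))) ?_
    intro p hp
    rw [← hvalN, ← hvalN]
    exact congrArg Subtype.val (hw p hp)
  obtain ⟨x, y, hx, hy, hxy⟩ := hb
  have hntB : Nontrivial B := ⟨⟨⟨x, hx⟩, ⟨y, hy⟩, fun h => hxy (congrArg Subtype.val h)⟩⟩
  have hBA : InQ F B A := hmin.2 B hdB hABsub hntB
  -- key: equations at b imply equations at a
  have key : ∀ s t : SLTerm F, s.eval b = t.eval b → s.eval a = t.eval a := by
    intro s t hst
    have hidB : SatQI F B [] (slToN 0 s, slToN 0 t) := by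
      intro w _
      show (slToN 0 s).eval w = (slToN 0 t).eval w
      rw [slToN_eval, slToN_eval]
      apply Subtype.val_injective
      rw [hval1, hval1]
      obtain ⟨u, hu⟩ := (w 0).2
      replace hu : u.eval b = ((w 0 : A)) := hu
      rw [← hu, eval_comm hA s u b, eval_comm hA t u b, hst]
    have := hBA [] _ hidB (fun _ => a) (by simp)
    simpa only [slToN_eval] using this
  -- converse: equations at a imply equations at b
  have key2 : ∀ s t : SLTerm F, s.eval a = t.eval a → s.eval b = t.eval b := by
    intro s t hst
    obtain ⟨u, hu⟩ := hgen b
    rw [← hu, eval_comm hA s u a, eval_comm hA t u a, hst]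
  -- the isomorphism
  refine ⟨fun x => (τA x).eval b, ?_, ?_, ⟨?_, ?_⟩, ?_⟩
  · intro x y hxy2
    have := key _ _ hxy2
    rw [hτA, hτA] at this
    exact this
  · ext u
    constructor
    · rintro ⟨x, rfl⟩
      exact ⟨τA x, rfl⟩
    · rintro ⟨t, rfl⟩
      refine ⟨t.eval a, ?_⟩
      apply key2
      rw [hτA]
  · intro x y
    have h1 : (τA (x ⊓ y)).eval a = ((τA x).meet (τA y)).eval a := by
      rw [hτA]
      show _ = SLTerm.eval _ a
      rw [SLTerm.eval, hτA, hτA]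
    have h2 := key2 _ _ h1
    show (τA (x ⊓ y)).eval b = (τA x).eval b ⊓ (τA y).eval b
    rw [h2]
    rfl
  · intro g x
    have h1 : (τA (g • x)).eval a = ((τA x).act g).eval a := by
      rw [hτA]
      show _ = SLTerm.eval _ a
      rw [SLTerm.eval, hτA]
    have h2 := key2 _ _ h1
    show (τA (g • x)).eval b = g • (τA x).eval b
    rw [h2]
    rfl
  · have h1 : (τA a).eval a = (SLTerm.var : SLTerm F).eval a := by rw [hτA]; rfl
    show (τA a).eval b = b
    exact key2 _ _ h1

end Main

/-- Characterization of the `1`-generated `F`-semilattices generating a minimal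
quasivariety: (a) ↔ (b) ↔ (c) ↔ (d). -/
theorem stmt_10 (F : Type) [CommGroup F] (A : Type) [SemilatticeInf A] [MulAction F A]
    (hA : ∀ (g : F) (x y : A), g • (x ⊓ y) = g • x ⊓ g • y)
    (hnt : Nontrivial A)
    (a : A) (hgen : ∀ x : A, ∃ t : SLTerm F, t.eval a = x) :
    (MinGen F A ↔
      ∀ b : A, (∃ x y : A, x ∈ genSet F b ∧ y ∈ genSet F b ∧ x ≠ y) →
        ∃ φ : A → A, Function.Injective φ ∧ Set.range φ = genSet F b ∧ IsHom F φ ∧ φ a = b) ∧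
    (MinGen F A ↔
      ∀ b : A, (∃ x y : A, x ∈ genSet F b ∧ y ∈ genSet F b ∧ x ≠ y) →
        ∃ φ : A → A, Function.Injective φ ∧ Set.range φ = genSet F b ∧ IsHom F φ) ∧
    (MinGen F A ↔
      ∀ b : A, ¬ IsBot b →
        ∃ φ : A → A, Function.Injective φ ∧ Set.range φ = genSet F b ∧ IsHom F φ) := by

  have hbc : (∀ b : A, (∃ x y : A, x ∈ genSet F b ∧ y ∈ genSet F b ∧ x ≠ y) →
        ∃ φ : A → A, Function.Injective φ ∧ Set.range φ = genSet F b ∧ IsHom F φ ∧ φ a = b) →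
      (∀ b : A, (∃ x y : A, x ∈ genSet F b ∧ y ∈ genSet F b ∧ x ≠ y) →
        ∃ φ : A → A, Function.Injective φ ∧ Set.range φ = genSet F b ∧ IsHom F φ) := by
    intro h b hb
    obtain ⟨φ, h1, h2, h3, _⟩ := h b hb
    exact ⟨φ, h1, h2, h3⟩
  refine ⟨⟨lem_ab hA a hgen, fun h => lem_ca hA hnt a hgen (hbc h)⟩,
    ⟨fun m => hbc (lem_ab hA a hgen m), lem_ca hA hnt a hgen⟩,
    ⟨fun m => lem_bd hA hnt a hgen (lem_ab hA a hgen m),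
      fun h => lem_ca hA hnt a hgen (lem_dc hA h)⟩⟩
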